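/- arXiv:2405.13853 — 2 statements merged into one kernel-verified Lean document; each statement's English description precedes it below -/
import Mathlib

section
/- Let F be a field and define φ(y,z) = (z/y, (1-z)/(1-y)) for y,z ∈ F with y ≠ 0 and y ≠ 1. Suppose y,z ∈ F satisfy y ∉ {0,1}, z ∉ {0,1}, and y ≠ z. Then φ(y,z) again satisfies these three conditions (both coordinates lie outside {0,1} and they are distinct), and the five-fold composite satisfies φ⁵(y,z) = (y,z). -/
/-- The map `φ(y,z) = (z/y, (1-z)/(1-y))`. -/
def phiRad {F : Type*} [Field F] (p : F × F) : F × F :=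
  (p.2 / p.1, (1 - p.2) / (1 - p.1))

lemma phiRad_step {F : Type*} [Field F] {y z : F}
    (hy0 : y ≠ 0) (hy1 : y ≠ 1) (hz0 : z ≠ 0) (hz1 : z ≠ 1) (hyz : y ≠ z) :
    (phiRad (y, z)).1 ≠ 0 ∧ (phiRad (y, z)).1 ≠ 1 ∧
      (phiRad (y, z)).2 ≠ 0 ∧ (phiRad (y, z)).2 ≠ 1 ∧
      (phiRad (y, z)).1 ≠ (phiRad (y, z)).2 := by
  have hy1' : (1 : F) - y ≠ 0 := sub_ne_zero.mpr (Ne.symm hy1)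
  have hz1' : (1 : F) - z ≠ 0 := sub_ne_zero.mpr (Ne.symm hz1)
  simp only [phiRad]
  refine ⟨div_ne_zero hz0 hy0, ?_, div_ne_zero hz1' hy1', ?_, ?_⟩
  · exact fun h => Ne.symm hyz ((div_eq_one_iff_eq hy0).mp h)
  · intro h
    have := (div_eq_one_iff_eq hy1').mp h
    exact hyz (by linear_combination this)
  · intro h
    rw [div_eq_div_iff hy0 hy1'] at h
    exact hyz (by linear_combination -h)

/-- If `y, z ∉ {0,1}` and `y ≠ z`, then `φ(y,z) = (z/y, (1-z)/(1-y))` again satisfies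
these three conditions, and `φ` has order five: `φ⁵(y,z) = (y,z)`. -/
theorem phiRad_conditions_and_order_five {F : Type*} [Field F] (y z : F)
    (hy0 : y ≠ 0) (hy1 : y ≠ 1) (hz0 : z ≠ 0) (hz1 : z ≠ 1) (hyz : y ≠ z) :
    ((phiRad (y, z)).1 ≠ 0 ∧ (phiRad (y, z)).1 ≠ 1 ∧
      (phiRad (y, z)).2 ≠ 0 ∧ (phiRad (y, z)).2 ≠ 1 ∧
      (phiRad (y, z)).1 ≠ (phiRad (y, z)).2) ∧
    phiRad^[5] (y, z) = (y, z) := by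
  refine ⟨phiRad_step hy0 hy1 hz0 hz1 hyz, ?_⟩
  have hy1' : (1 : F) - y ≠ 0 := sub_ne_zero.mpr (Ne.symm hy1)
  have hz1' : (1 : F) - z ≠ 0 := sub_ne_zero.mpr (Ne.symm hz1)
  have hy1'' : y - 1 ≠ 0 := sub_ne_zero.mpr hy1
  have hz1'' : z - 1 ≠ 0 := sub_ne_zero.mpr hz1
  have hzy : z - y ≠ 0 := sub_ne_zero.mpr (Ne.symm hyz)
  have hyz' : y - z ≠ 0 := sub_ne_zero.mpr hyz
  have h2 : phiRad (z / y, (1 - z) / (1 - y)) = (y * (1 - z) / (z * (1 - y)), y / (y - 1)) := by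
    simp only [phiRad]
    refine Prod.ext ?_ ?_ <;> field_simp <;> ring
  have hd : (-z + z * y + (y - y ^ 2)) ≠ 0 := by
    intro h
    exact mul_ne_zero hy1' hyz' (by linear_combination h)
  have h3 : phiRad (y * (1 - z) / (z * (1 - y)), y / (y - 1)) =
      (z / (z - 1), z / (z - y)) := by
    simp only [phiRad]
    refine Prod.ext ?_ ?_ <;> field_simp <;> try ring
    field_simp [hd, show -y + z ≠ 0 from fun h => hzy (by linear_combination h)]
    ring
  have h4 : phiRad (z / (z - 1), z / (z - y)) = ((z - 1) / (z - y), y * (z - 1) / (z - y)) := by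
    simp only [phiRad]
    refine Prod.ext ?_ ?_ <;> field_simp <;> ring
  have h5 : phiRad ((z - 1) / (z - y), y * (z - 1) / (z - y)) = (y, z) := by
    simp only [phiRad]
    refine Prod.ext ?_ ?_ <;> field_simp <;> ring
    field_simp [hy1']
    ring
  calc phiRad^[5] (y, z)
      = phiRad (phiRad (phiRad (phiRad (phiRad (y, z))))) := by
        simp [Function.iterate_succ_apply', Function.iterate_zero_apply]
    _ = (y, z) := by rw [show phiRad (y, z) = (z / y, (1 - z) / (1 - y)) from rfl, h2, h3, h4, h5]
end

section
/- Let Σ be a linearly ordered alphabet and let w be a Lyndon word over Σ (i.e. a nonempty word lexicographically strictly smaller than all its proper nonempty suffixes) of length at least 2. Let a be the first letter of w and let r ≥ 1 be the length of the initial run of a's in w (so w = aʳ·w' where w' is nonempty and does not start with a). Then the word a^{r+1} (r+1 consecutive copies of a) does not occur as a contiguous factor (infix) of w. -/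
lemma lex_append_cancel_aux {α : Type*} [LinearOrder α] (l t u : List α)
    (h : List.Lex (· < ·) (l ++ t) (l ++ u)) : List.Lex (· < ·) t u := by
  induction l with
  | nil => exact h
  | cons x l ih =>
    cases h with
    | rel h => exact absurd h (lt_irrefl x)
    | cons h => exact ih h

/-- In a Lyndon word `w = aʳ · w'` (with `a` the first letter, `r ≥ 1` the length of the
initial run of `a`'s, and `w'` nonempty not starting with `a`), the word `a^{r+1}` does
not occur as a contiguous factor (infix) of `w`. -/
theorem lyndon_initial_run_longest {α : Type*} [LinearOrder α] (w : List α) (a : α)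
    (r : ℕ) (w' : List α) (hne : w ≠ [])
    (hlyndon : ∀ i, 0 < i → i < w.length → List.Lex (· < ·) w (w.drop i))
    (hlen : 2 ≤ w.length)
    (hr : 1 ≤ r) (hdecomp : w = List.replicate r a ++ w') (hw' : w' ≠ [])
    (hstart : ∀ h : w' ≠ [], w'.head h ≠ a) :
    ¬ List.replicate (r + 1) a <:+: w := by
  rintro ⟨s, t, hst⟩
  obtain ⟨b, w'', rfl⟩ : ∃ b w'', w' = b :: w'' := by
    cases w' with
    | nil => exact absurd rfl hw'
    | cons b w'' => exact ⟨b, w'', rfl⟩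
  have hb : b ≠ a := hstart hw'
  have hrep : List.replicate (r + 1) a = List.replicate r a ++ [a] :=
    List.replicate_succ'
  -- a < b by comparing w with its suffix w'
  have hab : a < b := by
    have h1 := hlyndon r hr (by rw [hdecomp]; simp)
    rw [hdecomp, List.drop_left' (by simp)] at h1
    obtain ⟨r', rfl⟩ : ∃ r', r = r' + 1 := ⟨r - 1, by omega⟩
    rw [List.replicate_succ] at h1
    cases h1 with
    | rel h => exact h
    | cons h => exact absurd rfl hb
  rcases Nat.eq_zero_or_pos s.length with hs | hs
  · -- occurrence at position 0 : then w' starts with a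
    rw [List.length_eq_zero_iff] at hs
    subst hs
    rw [List.nil_append, hrep, hdecomp, List.append_assoc] at hst
    have := List.append_cancel_left hst
    simp at this
    exact hb this.1.symm
  · have hi : s.length < w.length := by
      rw [← hst]; simp only [List.length_append, List.length_replicate]; omega
    have hdrop : w.drop s.length = List.replicate (r + 1) a ++ t := by
      rw [← hst, List.append_assoc, List.drop_left]
    have h2 := hlyndon s.length hs hi
    rw [hdrop, hrep, List.append_assoc, hdecomp] at h2
    have h3 := lex_append_cancel_aux _ _ _ h2
    cases h3 with
    | rel h => exact absurd h (not_lt.mpr hab.le)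
    | cons h => exact absurd rfl hb
end
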